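/- (Gradient of the information bottleneck Lagrangian, Eq. (E8).) Let p be a joint probability distribution on X × Y with strictly positive marginals p_X, p_Y and conditionals p(y|x) = p(x,y)/p_X(x), and let β ∈ ℝ. For a strictly positive conditional kernel w from X to X̃, define the induced distributions q_w(x̃) = Σ_x p_X(x) w(x̃|x) and r_w(y|x̃) = (Σ_x p(x,y) w(x̃|x)) / q_w(x̃), and define L(w) = I(X;X̃) − β I(X̃;Y), the mutual informations being those of the joint distribution p(x,y) w(x̃|x), regarded as a smooth function of the vector (w(x̃|x))_{(x,x̃)} ∈ ℝ^{X×X̃} on a neighborhood of w on which all relevant quantities stay positive (normalization not imposed). Then for every x ∈ X and x̃ ∈ X̃, ∂L/∂w(x̃|x) = p_X(x) [ log( w(x̃|x)/q_w(x̃) ) − β Σ_y p(y|x) log( r_w(y|x̃)/p_Y(y) ) ]. -/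

import Mathlib

open Finset

/-- The information bottleneck Lagrangian `L(v) = I(X;X̃) − β I(X̃;Y)` of the joint
distribution `p(x,y) v(x̃|x)`, regarded as a function of the unnormalized vector
`v ∈ ℝ^{X×X̃}`. Here the marginal of `X` is `pX(x) = Σ_y p(x,y)`, the induced marginal of
`X̃` is `q_v(x̃) = Σ_x pX(x) v(x̃|x)`, the joint of `(X̃,Y)` is `m(x̃,y) = Σ_x p(x,y) v(x̃|x)`,
and the marginal of `Y` is `pY(y) = Σ_x p(x,y)`. -/
noncomputable def ibLagrangian {X Y Xt : Type*} [Fintype X] [Fintype Y] [Fintype Xt]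
    (p : X → Y → ℝ) (β : ℝ) (v : X × Xt → ℝ) : ℝ :=
  (∑ x, ∑ t, (∑ y, p x y) * v (x, t)
      * Real.log (v (x, t) / (∑ x', (∑ y, p x' y) * v (x', t))))
    - β * ∑ t, ∑ y, (∑ x, p x y * v (x, t))
      * Real.log ((∑ x, p x y * v (x, t))
          / ((∑ x', (∑ y', p x' y') * v (x', t)) * (∑ x', p x' y)))


lemma hasDerivAt_mul_log_div (M D : ℝ → ℝ) (m d s0 : ℝ)
    (hM : HasDerivAt M m s0) (hD : HasDerivAt D d s0)
    (hM0 : M s0 ≠ 0) (hD0 : D s0 ≠ 0) :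
    HasDerivAt (fun s => M s * Real.log (M s / D s))
      (m * Real.log (M s0 / D s0) + m - M s0 * d / D s0) s0 := by
  have hdiv := hM.div hD hD0
  have hlog := (Real.hasDerivAt_log (div_ne_zero hM0 hD0)).comp s0 hdiv
  have h := hM.mul hlog
  refine h.congr_deriv (Eq.symm ?_)
  simp only [Function.comp_apply, Pi.div_apply]
  field_simp
  ring

lemma ibAux_coord {X : Type*} [DecidableEq X] (w0 : X → ℝ) (x i : X) :
    HasDerivAt (fun s : ℝ => if i = x then s else w0 i)
      (if i = x then 1 else 0) (w0 x) := by
  by_cases h : i = x <;> simp [h]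
  · exact hasDerivAt_id _
  · exact hasDerivAt_const _ _

lemma ibAux_Q {X : Type*} [Fintype X] [DecidableEq X] (c w0 : X → ℝ) (x : X) :
    HasDerivAt (fun s : ℝ => ∑ j, c j * (if j = x then s else w0 j)) (c x) (w0 x) := by
  have h := HasDerivAt.fun_sum (u := univ)
    (A := fun j s => c j * (if j = x then s else w0 j))
    (A' := fun j => c j * (if j = x then 1 else 0)) (x := w0 x)
    (fun j _ => (ibAux_coord w0 x j).const_mul (c j))
  simpa [mul_ite] using h

lemma ibAux_Qval {X : Type*} [Fintype X] [DecidableEq X] (c w0 : X → ℝ) (x : X) :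
    ∑ j, c j * (if j = x then w0 x else w0 j) = ∑ j, c j * w0 j := by
  refine Finset.sum_congr rfl fun j _ => ?_
  by_cases h : j = x <;> simp [h]

lemma ibAux_Fa {X : Type*} [Fintype X] [DecidableEq X] (c w0 : X → ℝ) (x : X)
    (hc : ∀ i, 0 < c i) (hw0 : ∀ i, 0 < w0 i) :
    HasDerivAt (fun s : ℝ => ∑ i, c i * ((if i = x then s else w0 i)
        * Real.log ((if i = x then s else w0 i) / ∑ j, c j * (if j = x then s else w0 j))))
      (c x * Real.log (w0 x / ∑ j, c j * w0 j)) (w0 x) := by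
  set q := ∑ j, c j * w0 j with hq
  have hqpos : 0 < q := Finset.sum_pos (fun j _ => mul_pos (hc j) (hw0 j)) ⟨x, mem_univ x⟩
  have hterm : ∀ i ∈ univ, HasDerivAt
      (fun s : ℝ => c i * ((if i = x then s else w0 i)
        * Real.log ((if i = x then s else w0 i) / ∑ j, c j * (if j = x then s else w0 j))))
      (c i * ((if i = x then 1 else 0) * Real.log (w0 i / q)
        + (if i = x then 1 else 0) - w0 i * c x / q)) (w0 x) := by
    intro i _
    have hMval : (if i = x then w0 x else w0 i) = w0 i := by
      by_cases h : i = x <;> simp [h]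
    have h := hasDerivAt_mul_log_div
      (fun s => if i = x then s else w0 i)
      (fun s => ∑ j, c j * (if j = x then s else w0 j))
      (if i = x then 1 else 0) (c x) (w0 x)
      (ibAux_coord w0 x i) (ibAux_Q c w0 x)
      (show (if i = x then w0 x else w0 i) ≠ 0 by rw [hMval]; exact (hw0 i).ne')
      (show (∑ j, c j * (if j = x then w0 x else w0 j)) ≠ 0 by
        rw [ibAux_Qval]; exact hqpos.ne')
    simp only [hMval, ibAux_Qval] at h
    exact h.const_mul (c i)
  have h := HasDerivAt.fun_sum hterm
  refine h.congr_deriv (Eq.symm ?_)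
  have h1 : ∑ i, c i * ((if i = x then (1:ℝ) else 0) * Real.log (w0 i / q)
      + (if i = x then 1 else 0) - w0 i * c x / q)
      = c x * Real.log (w0 x / q) + c x - ∑ i, c i * (w0 i * c x / q) := by
    simp only [mul_add, mul_sub, Finset.sum_add_distrib, Finset.sum_sub_distrib,
      ite_mul, one_mul, zero_mul, mul_ite, mul_one, mul_zero,
      Finset.sum_ite_eq', mem_univ, if_true]
  rw [h1]
  have h2 : ∑ i, c i * (w0 i * c x / q) = c x := by
    have h3 : ∑ i, c i * (w0 i * c x / q) = (∑ i, c i * w0 i) * (c x / q) := by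
      rw [Finset.sum_mul]; exact Finset.sum_congr rfl fun i _ => by ring
    rw [h3, ← hq]
    field_simp
  rw [h2]; ring

lemma ibAux_Fb {X Y : Type*} [Fintype X] [Fintype Y] [DecidableEq X]
    (p : X → Y → ℝ) (c : X → ℝ) (pY : Y → ℝ) (w0 : X → ℝ) (x : X)
    (hp : ∀ i y, 0 ≤ p i y) (hc : ∀ i, c i = ∑ y, p i y) (hcpos : ∀ i, 0 < c i)
    (hpY : ∀ y, pY y = ∑ i, p i y) (hpYpos : ∀ y, 0 < pY y) (hw0 : ∀ i, 0 < w0 i) :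
    HasDerivAt (fun s : ℝ => ∑ y, (∑ i, p i y * (if i = x then s else w0 i))
        * Real.log ((∑ i, p i y * (if i = x then s else w0 i))
          / ((∑ j, c j * (if j = x then s else w0 j)) * pY y)))
      (∑ y, p x y * Real.log ((∑ i, p i y * w0 i) / (∑ j, c j * w0 j) / pY y)) (w0 x) := by
  set q := ∑ j, c j * w0 j with hq
  have hqpos : 0 < q := Finset.sum_pos (fun j _ => mul_pos (hcpos j) (hw0 j)) ⟨x, mem_univ x⟩
  have hM0pos : ∀ y, 0 < ∑ i, p i y * w0 i := by
    intro y
    have hy : 0 < ∑ i, p i y := by rw [← hpY]; exact hpYpos y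
    obtain ⟨i, _, hi⟩ := Finset.exists_lt_of_sum_lt
      (show ∑ _i : X, (0:ℝ) < ∑ i, p i y by simpa using hy)
    exact Finset.sum_pos' (fun j _ => mul_nonneg (hp j y) (hw0 j).le)
      ⟨i, mem_univ i, mul_pos hi (hw0 i)⟩
  have hMval : ∀ y, ∑ i, p i y * (if i = x then w0 x else w0 i) = ∑ i, p i y * w0 i :=
    fun y => ibAux_Qval (fun i => p i y) w0 x
  have hterm : ∀ y ∈ (univ : Finset Y), HasDerivAt
      (fun s : ℝ => (∑ i, p i y * (if i = x then s else w0 i))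
        * Real.log ((∑ i, p i y * (if i = x then s else w0 i))
          / ((∑ j, c j * (if j = x then s else w0 j)) * pY y)))
      (p x y * Real.log ((∑ i, p i y * w0 i) / (q * pY y))
        + p x y - (∑ i, p i y * w0 i) * (c x * pY y) / (q * pY y)) (w0 x) := by
    intro y _
    have h := hasDerivAt_mul_log_div
      (fun s => ∑ i, p i y * (if i = x then s else w0 i))
      (fun s => (∑ j, c j * (if j = x then s else w0 j)) * pY y)
      (p x y) (c x * pY y) (w0 x)
      (ibAux_Q (fun i => p i y) w0 x) ((ibAux_Q c w0 x).mul_const (pY y))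
      (show (∑ i, p i y * (if i = x then w0 x else w0 i)) ≠ 0 by
        rw [hMval]; exact (hM0pos y).ne')
      (show (∑ j, c j * (if j = x then w0 x else w0 j)) * pY y ≠ 0 by
        rw [ibAux_Qval]; exact (mul_pos hqpos (hpYpos y)).ne')
    simp only [hMval, ibAux_Qval] at h
    exact h
  have h := HasDerivAt.fun_sum hterm
  refine h.congr_deriv (Eq.symm ?_)
  simp only [Finset.sum_sub_distrib, Finset.sum_add_distrib]
  have hA : ∑ y, p x y * Real.log ((∑ i, p i y * w0 i) / (q * pY y))
      = ∑ y, p x y * Real.log ((∑ i, p i y * w0 i) / q / pY y) := by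
    exact Finset.sum_congr rfl fun y _ => by rw [div_div]
  have hB : ∑ y, p x y = c x := (hc x).symm
  have hC : ∑ y, (∑ i, p i y * w0 i) * (c x * pY y) / (q * pY y) = c x := by
    have h3 : ∀ y, (∑ i, p i y * w0 i) * (c x * pY y) / (q * pY y)
        = (∑ i, p i y * w0 i) * (c x / q) := by
      intro y
      rw [mul_comm q (pY y), mul_comm (c x) (pY y), mul_div_assoc]
      rw [mul_div_mul_left _ _ (hpYpos y).ne']
    rw [Finset.sum_congr rfl fun y _ => h3 y, ← Finset.sum_mul]
    have h4 : ∑ y, ∑ i, p i y * w0 i = q := by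
      rw [Finset.sum_comm, hq]
      exact Finset.sum_congr rfl fun i _ => by rw [hc, Finset.sum_mul]
    rw [h4]
    field_simp
  rw [hA, hB, hC]
  ring

/-- Gradient of the information bottleneck Lagrangian, Eq. (E8): at a strictly
positive conditional kernel `w`, with induced `q_w(x̃) = Σ_x pX(x) w(x̃|x)` and
`r_w(y|x̃) = (Σ_x p(x,y) w(x̃|x))/q_w(x̃)`, the partial derivative of `L` with respect to the
coordinate `w(x̃|x)` equals
`pX(x) [ log(w(x̃|x)/q_w(x̃)) − β Σ_y p(y|x) log(r_w(y|x̃)/pY(y)) ]`. -/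
theorem ibLagrangian_partial_deriv
    {X Y Xt : Type*} [Fintype X] [Fintype Y] [Fintype Xt]
    [DecidableEq X] [DecidableEq Xt]
    (p : X → Y → ℝ)
    (hp : ∀ x y, 0 ≤ p x y)
    (hpsum : ∑ x, ∑ y, p x y = 1)
    (pX : X → ℝ) (hpX : ∀ x, pX x = ∑ y, p x y) (hpXpos : ∀ x, 0 < pX x)
    (pY : Y → ℝ) (hpY : ∀ y, pY y = ∑ x, p x y) (hpYpos : ∀ y, 0 < pY y)
    (β : ℝ)
    (w : X × Xt → ℝ) (hw : ∀ x t, 0 < w (x, t))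
    (hwsum : ∀ x, ∑ t, w (x, t) = 1)
    (qw : Xt → ℝ) (hqw : ∀ t, qw t = ∑ x, pX x * w (x, t))
    (rw : Y → Xt → ℝ) (hrw : ∀ y t, rw y t = (∑ x, p x y * w (x, t)) / qw t)
    (x : X) (t : Xt) :
    HasDerivAt (fun s : ℝ => ibLagrangian p β (Function.update w (x, t) s))
      (pX x * (Real.log (w (x, t) / qw t)
        - β * ∑ y, (p x y / pX x) * Real.log (rw y t / pY y)))
      (w (x, t)) := by
  classical
  -- evaluation of the update
  have hupd1 : ∀ (s : ℝ) (x'' : X) (t'' : Xt), t'' ≠ t →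
      Function.update w (x, t) s (x'', t'') = w (x'', t'') := by
    intro s a b hb
    rw [Function.update_apply, if_neg (by simp [hb])]
  have hupd2 : ∀ (s : ℝ) (x' : X),
      Function.update w (x, t) s (x', t) = if x' = x then s else w (x', t) := by
    intro s a
    by_cases h : a = x
    · subst h; simp
    · rw [Function.update_apply, if_neg (by simp [h]), if_neg h]
  -- the function rewritten
  have hfun : ∀ s : ℝ, ibLagrangian p β (Function.update w (x, t) s) =
      ((∑ t' ∈ univ.erase t, ∑ x', pX x' * (w (x', t')
          * Real.log (w (x', t') / ∑ x'', pX x'' * w (x'', t'))))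
        + ∑ x', pX x' * ((if x' = x then s else w (x', t))
          * Real.log ((if x' = x then s else w (x', t))
            / ∑ x'', pX x'' * (if x'' = x then s else w (x'', t)))))
      - β * ((∑ t' ∈ univ.erase t, ∑ y, (∑ x', p x' y * w (x', t'))
          * Real.log ((∑ x', p x' y * w (x', t'))
            / ((∑ x'', pX x'' * w (x'', t')) * pY y)))
        + ∑ y, (∑ x', p x' y * (if x' = x then s else w (x', t)))
          * Real.log ((∑ x', p x' y * (if x' = x then s else w (x', t)))
            / ((∑ x'', pX x'' * (if x'' = x then s else w (x'', t))) * pY y))) := by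
    intro s
    unfold ibLagrangian
    simp only [← hpX, ← hpY]
    have hA : (∑ x', ∑ t', pX x' * Function.update w (x, t) s (x', t')
          * Real.log (Function.update w (x, t) s (x', t')
            / ∑ x'', pX x'' * Function.update w (x, t) s (x'', t')))
        = (∑ t' ∈ univ.erase t, ∑ x', pX x' * (w (x', t')
            * Real.log (w (x', t') / ∑ x'', pX x'' * w (x'', t'))))
          + ∑ x', pX x' * ((if x' = x then s else w (x', t))
            * Real.log ((if x' = x then s else w (x', t))
              / ∑ x'', pX x'' * (if x'' = x then s else w (x'', t)))) := by
      rw [Finset.sum_comm, ← Finset.sum_erase_add _ _ (Finset.mem_univ t)]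
      congr 1
      · refine Finset.sum_congr rfl fun t' ht' => Finset.sum_congr rfl fun x' _ => ?_
        have ht := Finset.ne_of_mem_erase ht'
        simp only [hupd1 s _ _ ht, mul_assoc]
      · refine Finset.sum_congr rfl fun x' _ => ?_
        simp only [hupd2 s, mul_assoc]
    have hB : (∑ t', ∑ y, (∑ x', p x' y * Function.update w (x, t) s (x', t'))
          * Real.log ((∑ x', p x' y * Function.update w (x, t) s (x', t'))
            / ((∑ x'', pX x'' * Function.update w (x, t) s (x'', t')) * pY y)))
        = (∑ t' ∈ univ.erase t, ∑ y, (∑ x', p x' y * w (x', t'))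
            * Real.log ((∑ x', p x' y * w (x', t'))
              / ((∑ x'', pX x'' * w (x'', t')) * pY y)))
          + ∑ y, (∑ x', p x' y * (if x' = x then s else w (x', t)))
            * Real.log ((∑ x', p x' y * (if x' = x then s else w (x', t)))
              / ((∑ x'', pX x'' * (if x'' = x then s else w (x'', t))) * pY y)) := by
      rw [← Finset.sum_erase_add _ _ (Finset.mem_univ t)]
      congr 1
      · refine Finset.sum_congr rfl fun t' ht' => Finset.sum_congr rfl fun y _ => ?_
        have ht := Finset.ne_of_mem_erase ht'
        simp only [hupd1 s _ _ ht]
      · refine Finset.sum_congr rfl fun y _ => ?_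
        simp only [hupd2 s]
    rw [hA, hB]
  have hFa := ibAux_Fa pX (fun x' => w (x', t)) x hpXpos (fun i => hw i t)
  have hFb := ibAux_Fb p pX pY (fun x' => w (x', t)) x hp (fun i => hpX i) hpXpos
    hpY hpYpos (fun i => hw i t)
  have keyA := (hasDerivAt_const (w (x, t))
        (∑ t' ∈ univ.erase t, ∑ x', pX x' * (w (x', t')
          * Real.log (w (x', t') / ∑ x'', pX x'' * w (x'', t'))))).add hFa
  have keyB := ((hasDerivAt_const (w (x, t))
        (∑ t' ∈ univ.erase t, ∑ y, (∑ x', p x' y * w (x', t'))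
          * Real.log ((∑ x', p x' y * w (x', t'))
            / ((∑ x'', pX x'' * w (x'', t')) * pY y)))).add hFb).const_mul β
  have key := keyA.sub keyB
  have hfeq : (fun s : ℝ => ibLagrangian p β (Function.update w (x, t) s)) =
      fun s : ℝ =>
      ((∑ t' ∈ univ.erase t, ∑ x', pX x' * (w (x', t')
          * Real.log (w (x', t') / ∑ x'', pX x'' * w (x'', t'))))
        + ∑ x', pX x' * ((if x' = x then s else w (x', t))
          * Real.log ((if x' = x then s else w (x', t))
            / ∑ x'', pX x'' * (if x'' = x then s else w (x'', t)))))
      - β * ((∑ t' ∈ univ.erase t, ∑ y, (∑ x', p x' y * w (x', t'))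
          * Real.log ((∑ x', p x' y * w (x', t'))
            / ((∑ x'', pX x'' * w (x'', t')) * pY y)))
        + ∑ y, (∑ x', p x' y * (if x' = x then s else w (x', t)))
          * Real.log ((∑ x', p x' y * (if x' = x then s else w (x', t)))
            / ((∑ x'', pX x'' * (if x'' = x then s else w (x'', t))) * pY y))) :=
    funext hfun
  rw [hfeq]
  refine key.congr_deriv (Eq.symm ?_)
  simp only [zero_add, hqw, hrw]
  rw [mul_sub]
  congr 1
  rw [mul_left_comm]
  congr 1
  rw [Finset.mul_sum]
  refine Finset.sum_congr rfl fun y _ => ?_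
  field_simp
  rw [mul_assoc]
  exact mul_div_cancel_left₀ _ (hpXpos x).ne'
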